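/- Let -1/2 < d < 0 and define γ(h) = (Γ(1−2d)/(Γ(1−d)·Γ(d)))·Γ(h+d)/Γ(h+1−d) for integers h ≥ 0. Then γ(0) + 2·∑_{h=1}^∞ γ(h) = 0. -/

import Mathlib

open Real Filter

/-- Log-convexity bound: `Γ x ≤ Γ (x+t) / (x-1+t)^t` for suitable `x, t`. -/
lemma my_gamma_logconvex_bound (x t : ℝ) (hx : 0 < x) (ht0 : 0 < t) (ht1 : t < 1)
    (hxt : 0 < x - 1 + t) :
    Real.Gamma x ≤ Real.Gamma (x + t) / (x - 1 + t) ^ t := by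
  have hbt : (0:ℝ) < x + t := by linarith
  have key := Real.convexOn_log_Gamma.2 (Set.mem_Ioi.mpr hxt) (Set.mem_Ioi.mpr hbt)
    (le_of_lt ht0) (by linarith : (0:ℝ) ≤ 1 - t) (by ring)
  have hcomb : t • (x - 1 + t) + (1 - t) • (x + t) = x := by
    simp only [smul_eq_mul]; ring
  rw [hcomb] at key
  have hGa : Real.Gamma (x + t) = (x - 1 + t) * Real.Gamma (x - 1 + t) := by
    have h1 : x + t = (x - 1 + t) + 1 := by ring
    rw [h1, Real.Gamma_add_one hxt.ne']
  have hGapos : 0 < Real.Gamma (x - 1 + t) := Real.Gamma_pos_of_pos hxt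
  have hGbpos : 0 < Real.Gamma (x + t) := Real.Gamma_pos_of_pos hbt
  have hGxpos : 0 < Real.Gamma x := Real.Gamma_pos_of_pos hx
  have hlog : Real.log (Real.Gamma x) ≤
      Real.log (Real.Gamma (x + t)) - t * Real.log (x - 1 + t) := by
    have hsplit : Real.log (Real.Gamma (x + t)) =
        Real.log (x - 1 + t) + Real.log (Real.Gamma (x - 1 + t)) := by
      rw [hGa, Real.log_mul hxt.ne' hGapos.ne']
    simp only [Function.comp, smul_eq_mul] at key
    nlinarith [key]
  calc Real.Gamma x = Real.exp (Real.log (Real.Gamma x)) := (Real.exp_log hGxpos).symm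
    _ ≤ Real.exp (Real.log (Real.Gamma (x + t)) - t * Real.log (x - 1 + t)) :=
        Real.exp_le_exp.mpr hlog
    _ = Real.Gamma (x + t) / (x - 1 + t) ^ t := by
        rw [Real.exp_sub, Real.exp_log hGbpos, Real.rpow_def_of_pos hxt, mul_comm]

theorem farima_spectral_density_zero (d : ℝ) (hd1 : -(1 / 2) < d) (hd2 : d < 0)
    (γ : ℕ → ℝ)
    (hγ : ∀ h : ℕ, γ h = Real.Gamma (1 - 2 * d) / (Real.Gamma (1 - d) * Real.Gamma d) *
        (Real.Gamma ((h : ℝ) + d) / Real.Gamma ((h : ℝ) + 1 - d))) :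
    γ 0 + 2 * ∑' h : ℕ, γ (h + 1) = 0 := by
  have hd0 : d ≠ 0 := hd2.ne
  set C : ℝ := Real.Gamma (1 - 2 * d) / (Real.Gamma (1 - d) * Real.Gamma d) with hC
  have hpos1 : ∀ n : ℕ, (0:ℝ) < (n:ℝ) + 1 + d := fun n => by
    have : (0:ℝ) ≤ (n:ℝ) := n.cast_nonneg; linarith
  have hpos2 : ∀ n : ℕ, (0:ℝ) < (n:ℝ) + 1 - d := fun n => by
    have : (0:ℝ) ≤ (n:ℝ) := n.cast_nonneg; linarith
  set g : ℕ → ℝ := fun h => Real.Gamma ((h:ℝ) + 1 + d) / Real.Gamma ((h:ℝ) + 2 - d) with hg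
  set e : ℕ → ℝ := fun n =>
    Real.Gamma ((n:ℝ) + 1 + d) / (2 * d * Real.Gamma ((n:ℝ) + 1 - d)) with he
  have hgpos : ∀ h, 0 < g h := fun h => by
    have h2 : (0:ℝ) < (h:ℝ) + 2 - d := by have := hpos2 h; linarith
    exact div_pos (Real.Gamma_pos_of_pos (hpos1 h)) (Real.Gamma_pos_of_pos h2)
  -- telescoping identity
  have htel : ∀ n : ℕ, g n = e (n + 1) - e n := by
    intro n
    have hA : (0:ℝ) < (n:ℝ) + 1 + d := hpos1 n
    have hB : (0:ℝ) < (n:ℝ) + 1 - d := hpos2 n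
    have hGA : Real.Gamma (((n:ℝ)+1) + 1 + d) = ((n:ℝ) + 1 + d) * Real.Gamma ((n:ℝ)+1+d) := by
      have h1 : ((n:ℝ)+1) + 1 + d = ((n:ℝ)+1+d) + 1 := by ring
      rw [h1, Real.Gamma_add_one hA.ne']
    have hGB : Real.Gamma (((n:ℝ)+1) + 1 - d) = ((n:ℝ) + 1 - d) * Real.Gamma ((n:ℝ)+1-d) := by
      have h1 : ((n:ℝ)+1) + 1 - d = ((n:ℝ)+1-d) + 1 := by ring
      rw [h1, Real.Gamma_add_one hB.ne']
    have hGB' : Real.Gamma ((n:ℝ) + 2 - d) = ((n:ℝ) + 1 - d) * Real.Gamma ((n:ℝ)+1-d) := by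
      have h1 : (n:ℝ) + 2 - d = ((n:ℝ)+1) + 1 - d := by ring
      rw [h1, hGB]
    have hBne : Real.Gamma ((n:ℝ)+1-d) ≠ 0 := (Real.Gamma_pos_of_pos hB).ne'
    simp only [hg, he, Nat.cast_add, Nat.cast_one, hGA, hGB, hGB']
    field_simp
    ring
  -- partial sums
  have hsum : ∀ n : ℕ, ∑ i ∈ Finset.range n, g i = e n - e 0 := by
    intro n
    induction n with
    | zero => simp
    | succ k ih => rw [Finset.sum_range_succ, ih, htel k]; ring
  -- bound on the Gamma ratio
  have hfbound : ∀ n : ℕ, Real.Gamma ((n:ℝ)+1+d) / Real.Gamma ((n:ℝ)+1-d)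
      ≤ ((n:ℝ) - d) ^ (2 * d) := by
    intro n
    have hx : (0:ℝ) < (n:ℝ) + 1 + d := hpos1 n
    have ht0 : (0:ℝ) < -(2*d) := by linarith
    have ht1 : -(2*d) < 1 := by linarith
    have hxt : (0:ℝ) < ((n:ℝ)+1+d) - 1 + -(2*d) := by
      have : (0:ℝ) ≤ (n:ℝ) := n.cast_nonneg; linarith
    have hkey := my_gamma_logconvex_bound ((n:ℝ)+1+d) (-(2*d)) hx ht0 ht1 hxt
    have hxteq : ((n:ℝ)+1+d) - 1 + -(2*d) = (n:ℝ) - d := by ring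
    have hxt2 : ((n:ℝ)+1+d) + -(2*d) = (n:ℝ) + 1 - d := by ring
    rw [hxteq, hxt2] at hkey
    have hndpos : (0:ℝ) < (n:ℝ) - d := by rw [hxteq] at hxt; exact hxt
    have hBpos : (0:ℝ) < Real.Gamma ((n:ℝ)+1-d) := Real.Gamma_pos_of_pos (hpos2 n)
    have hppos : (0:ℝ) < ((n:ℝ) - d) ^ (-(2*d)) := Real.rpow_pos_of_pos hndpos _
    calc Real.Gamma ((n:ℝ)+1+d) / Real.Gamma ((n:ℝ)+1-d)
        ≤ (Real.Gamma ((n:ℝ)+1-d) / ((n:ℝ) - d) ^ (-(2*d))) / Real.Gamma ((n:ℝ)+1-d) := by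
          gcongr
      _ = (((n:ℝ) - d) ^ (-(2*d)))⁻¹ := by field_simp
      _ = ((n:ℝ) - d) ^ (2 * d) := by
          rw [← Real.rpow_neg hndpos.le, neg_neg]
  -- e tends to 0
  have hbnd_tendsto : Tendsto (fun n : ℕ => ((n:ℝ) - d) ^ (2 * d)) atTop (nhds 0) := by
    have h1 : Tendsto (fun n : ℕ => (n:ℝ) - d) atTop atTop := by
      simpa [sub_eq_add_neg] using
        tendsto_atTop_add_const_right atTop (-d) (tendsto_natCast_atTop_atTop (R := ℝ))
    have h2 : Tendsto (fun x : ℝ => x ^ (-(-(2*d)))) atTop (nhds 0) :=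
      tendsto_rpow_neg_atTop (by linarith : (0:ℝ) < -(2*d))
    simpa [neg_neg, Function.comp_def] using h2.comp h1
  have hf_tendsto : Tendsto (fun n : ℕ =>
      Real.Gamma ((n:ℝ)+1+d) / Real.Gamma ((n:ℝ)+1-d)) atTop (nhds 0) := by
    refine squeeze_zero (fun n => ?_) hfbound hbnd_tendsto
    exact (div_pos (Real.Gamma_pos_of_pos (hpos1 n))
      (Real.Gamma_pos_of_pos (hpos2 n))).le
  have he_tendsto : Tendsto e atTop (nhds 0) := by
    have heq : e = fun n : ℕ =>
        (Real.Gamma ((n:ℝ)+1+d) / Real.Gamma ((n:ℝ)+1-d)) / (2*d) := by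
      funext n; simp only [he]; field_simp
    rw [heq]
    simpa using hf_tendsto.div_const (2*d)
  -- HasSum g (-(e 0))
  have hgsum : HasSum g (-(e 0)) := by
    rw [hasSum_iff_tendsto_nat_of_nonneg (fun i => (hgpos i).le)]
    have : Tendsto (fun n : ℕ => e n - e 0) atTop (nhds (0 - e 0)) :=
      he_tendsto.sub_const (e 0)
    simpa [hsum] using this.congr (fun n => (hsum n).symm)
  -- γ (h+1) = C * g h
  have hγg : ∀ h : ℕ, γ (h + 1) = C * g h := by
    intro h
    rw [hγ (h + 1)]
    have h1 : ((h + 1 : ℕ) : ℝ) + d = (h:ℝ) + 1 + d := by push_cast; ring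
    have h2 : ((h + 1 : ℕ) : ℝ) + 1 - d = (h:ℝ) + 2 - d := by push_cast; ring
    rw [h1, h2]
  have hγsum : HasSum (fun h : ℕ => γ (h + 1)) (C * -(e 0)) := by
    have := hgsum.mul_left C
    exact this.congr_fun fun h => hγg h
  rw [hγsum.tsum_eq, hγ 0]
  -- final algebra
  have hG1d : Real.Gamma (1 - d) ≠ 0 := (Real.Gamma_pos_of_pos (by linarith)).ne'
  have he0 : e 0 = Real.Gamma d / (2 * Real.Gamma (1 - d)) := by
    simp only [he, Nat.cast_zero]
    have h1 : (0:ℝ) + 1 + d = d + 1 := by ring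
    have h2 : (0:ℝ) + 1 - d = 1 - d := by ring
    rw [h1, h2, Real.Gamma_add_one hd0]
    field_simp
  rw [he0]
  have h0 : ((0:ℕ):ℝ) + d = d := by push_cast; ring
  have h0' : ((0:ℕ):ℝ) + 1 - d = 1 - d := by push_cast; ring
  rw [h0, h0']
  rw [hC]
  field_simp
  ring
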